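/- arXiv:2102.01662 — 4 statements merged into one kernel-verified Lean document; each statement's English description precedes it below -/
import Mathlib

section
/- Let K, D, L be positive integers with L ≤ D ≤ K, and let R = K mod D. For any finite sequence N_1, ..., N_n of positive integers satisfying N_1 = D, 1 ≤ N_i ≤ D for all i, and N_1 + ... + N_n = K, it holds that ∑_{i=1}^n min(L, N_i) ≥ L·⌊K/D⌋ + min(L, R). -/
lemma step_lemma (L D S N : ℕ) (hL : L ≤ D) (hD : 0 < D) (hND : N ≤ D) :
    L * ((S + N) / D) + min L ((S + N) % D) ≤
      min L N + (L * (S / D) + min L (S % D)) := by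
  obtain ⟨q, r, hr, hS⟩ : ∃ q r, r < D ∧ S = D * q + r :=
    ⟨S / D, S % D, Nat.mod_lt _ hD, (Nat.div_add_mod S D).symm⟩
  subst hS
  have h1 : (D * q + r) / D = q := by
    rw [Nat.mul_add_div hD, Nat.div_eq_of_lt hr, Nat.add_zero]
  have h2 : (D * q + r) % D = r := by
    rw [Nat.mul_add_mod, Nat.mod_eq_of_lt hr]
  have h3 : D * q + r + N = D * q + (r + N) := by ring
  rw [h1, h2, h3, Nat.mul_add_div hD, Nat.mul_add_mod, Nat.mul_add]
  clear h1 h2 h3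
  rcases lt_or_ge (r + N) D with h | h
  · rw [Nat.div_eq_of_lt h, Nat.mod_eq_of_lt h, Nat.mul_zero]
    omega
  · have h4 : (r + N) / D = 1 :=
      Nat.div_eq_of_lt_le (by omega) (by omega)
    have h5 : (r + N) % D = r + N - D := by
      rw [Nat.mod_eq_sub_mod h, Nat.mod_eq_of_lt (by omega)]
    rw [h4, h5, Nat.mul_one]
    omega

lemma main_lemma (L D : ℕ) (hL : L ≤ D) (hD : 0 < D) :
    ∀ n (N : Fin n → ℕ), (∀ i, N i ≤ D) →
      L * ((∑ i, N i) / D) + min L ((∑ i, N i) % D) ≤ ∑ i, min L (N i) := by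
  intro n
  induction n with
  | zero => intro N _; simp
  | succ m ih =>
      intro N hub
      rw [Fin.sum_univ_succ, Fin.sum_univ_succ]
      calc L * ((N 0 + ∑ i : Fin m, N i.succ) / D)
              + min L ((N 0 + ∑ i : Fin m, N i.succ) % D)
          ≤ min L (N 0) + (L * ((∑ i : Fin m, N i.succ) / D)
              + min L ((∑ i : Fin m, N i.succ) % D)) := by
            rw [add_comm (N 0)]
            exact step_lemma L D _ _ hL hD (hub 0)
        _ ≤ min L (N 0) + ∑ i : Fin m, min L (N i.succ) := by
            gcongr
            exact ih _ (fun i => hub i.succ)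

/-- Converse sum bound: for increments N_i with N_1 = D, 1 ≤ N_i ≤ D and total K,
the sum of min(L, N_i) is at least L·⌊K/D⌋ + min(L, K mod D). -/
theorem stmt0 (K D L : ℕ) (hL : 1 ≤ L) (hLD : L ≤ D) (hDK : D ≤ K)
    (n : ℕ) (hn : 0 < n) (N : Fin n → ℕ)
    (hN1 : N ⟨0, hn⟩ = D)
    (hNlb : ∀ i, 1 ≤ N i) (hNub : ∀ i, N i ≤ D)
    (hsum : ∑ i, N i = K) :
    L * (K / D) + min L (K % D) ≤ ∑ i, min L (N i) := by
  subst hsum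
  exact main_lemma L D hLD (by omega) n N hNub
end

section
/- Let K, D, L be positive integers with L ≤ D ≤ K and R = K mod D. The integer linear program: minimize ∑_{j=1}^{L} T_j·j + ∑_{j=L+1}^{D} T_j·L subject to ∑_{j=1}^{D} T_j·j = K, T_j ∈ ℕ for 1 ≤ j < D, and T_D ≥ 1, has optimal value L·⌊K/D⌋ + min(L, R), attained by T_D = ⌊K/D⌋, T_R = 1 (if R > 0), and T_j = 0 otherwise. -/
private lemma ilp_obj_eq (L D : ℕ) (hLD : L ≤ D) (T : ℕ → ℕ) :
    ∑ j ∈ Finset.Icc 1 L, T j * j + ∑ j ∈ Finset.Icc (L + 1) D, T j * L =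
      ∑ j ∈ Finset.Icc 1 D, T j * min L j := by
  have h1 : ∑ j ∈ Finset.Icc 1 L, T j * j = ∑ j ∈ Finset.Ioc 0 L, T j * min L j := by
    rw [← Finset.Icc_add_one_left_eq_Ioc]
    exact Finset.sum_congr rfl fun j hj => by
      rw [min_eq_right (Finset.mem_Icc.mp hj).2]
  have h2 : ∑ j ∈ Finset.Icc (L + 1) D, T j * L = ∑ j ∈ Finset.Ioc L D, T j * min L j := by
    rw [← Finset.Icc_add_one_left_eq_Ioc]
    exact Finset.sum_congr rfl fun j hj => by
      rw [min_eq_left (le_trans (Nat.le_succ L) (Finset.mem_Icc.mp hj).1)]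
  rw [h1, h2, Finset.sum_Ioc_consecutive _ (Nat.zero_le L) hLD, ← Finset.Icc_add_one_left_eq_Ioc, Nat.zero_add]

private lemma ilp_key (L D : ℕ) (hL : 1 ≤ L) (hLD : L ≤ D) (a j : ℕ) (hj1 : 1 ≤ j)
    (hjD : j ≤ D) :
    L * ((a + j) / D) + min L ((a + j) % D) ≤ (L * (a / D) + min L (a % D)) + min L j := by
  have hD : 0 < D := hL.trans hLD
  have ha := Nat.div_add_mod a D
  set q := a / D with hq
  set r := a % D with hr
  have hrD : r < D := Nat.mod_lt _ hD
  have hsplit : a + j = D * q + (r + j) := by rw [← Nat.add_assoc, ha]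
  rw [hsplit, Nat.mul_add_div hD, Nat.mul_add_mod]
  by_cases hcase : r + j < D
  · rw [Nat.div_eq_of_lt hcase, Nat.mod_eq_of_lt hcase, Nat.add_zero]
    clear ha hsplit hq hr
    generalize L * q = M
    omega
  · have h1 : (r + j) / D = 1 := by
      refine Nat.div_eq_of_lt_le (by omega) (by omega)
    have h2 : (r + j) % D = r + j - D := by
      rw [Nat.mod_eq_sub_mod (by omega), Nat.mod_eq_of_lt (by omega)]
    rw [h1, h2, Nat.mul_add, Nat.mul_one]
    clear ha hsplit hq hr
    generalize L * q = M
    omega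

private lemma ilp_lb (L D : ℕ) (hL : 1 ≤ L) (hLD : L ≤ D) :
    ∀ K, ∀ T : ℕ → ℕ, (∑ j ∈ Finset.Icc 1 D, T j * j = K) →
      L * (K / D) + min L (K % D) ≤ ∑ j ∈ Finset.Icc 1 D, T j * min L j := by
  intro K
  induction K using Nat.strong_induction_on with
  | _ K ih =>
    intro T hT
    rcases Nat.eq_zero_or_pos K with h0 | hpos
    · subst h0; simp
    · obtain ⟨j, hj, hTj⟩ : ∃ j ∈ Finset.Icc 1 D, T j ≠ 0 := by
        by_contra h
        push_neg at h
        rw [Finset.sum_eq_zero (fun i hi => by rw [h i hi, Nat.zero_mul])] at hT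
        omega
      obtain ⟨hj1, hjD⟩ := Finset.mem_Icc.mp hj
      set T' := Function.update T j (T j - 1) with hT'
      have hw : ∀ w : ℕ → ℕ, ∑ i ∈ Finset.Icc 1 D, T i * w i =
          (∑ i ∈ Finset.Icc 1 D, T' i * w i) + w j := by
        intro w
        rw [← Finset.sum_erase_add _ _ hj,
            ← Finset.sum_erase_add (Finset.Icc 1 D) (fun i => T' i * w i) hj]
        have h1 : ∑ i ∈ (Finset.Icc 1 D).erase j, T' i * w i =
            ∑ i ∈ (Finset.Icc 1 D).erase j, T i * w i :=
          Finset.sum_congr rfl fun i hi => by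
            rw [hT', Function.update_of_ne (Finset.ne_of_mem_erase hi)]
        rw [h1, hT', Function.update_self, Nat.add_assoc]
        congr 1
        obtain ⟨m, hm⟩ : ∃ m, T j = m + 1 := ⟨T j - 1, by omega⟩
        rw [hm, Nat.succ_sub_one, Nat.add_one_mul]
      have hid := hw (fun i => i)
      have hjK : j ≤ K := by omega
      have hK' : ∑ i ∈ Finset.Icc 1 D, T' i * i = K - j := by omega
      have hIH := ih (K - j) (by omega) T' hK'
      have hkey := ilp_key L D hL hLD (K - j) j hj1 hjD
      rw [Nat.sub_add_cancel hjK] at hkey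
      calc L * (K / D) + min L (K % D)
          ≤ (L * ((K - j) / D) + min L ((K - j) % D)) + min L j := hkey
        _ ≤ (∑ i ∈ Finset.Icc 1 D, T' i * min L i) + min L j :=
            Nat.add_le_add_right hIH _
        _ = ∑ i ∈ Finset.Icc 1 D, T i * min L i := (hw (fun i => min L i)).symm

/-- The ILP from the converse proof: minimize ∑_{j≤L} T_j·j + ∑_{L<j≤D} T_j·L subject to
∑_{j=1}^D T_j·j = K and T_D ≥ 1, has optimal value L·⌊K/D⌋ + min(L,R), R = K mod D,
attained at T_D = ⌊K/D⌋, T_R = 1 (if R > 0), T_j = 0 otherwise. -/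
theorem stmt1 (K D L : ℕ) (hL : 1 ≤ L) (hLD : L ≤ D) (hDK : D ≤ K)
    (R : ℕ) (hR : R = K % D) :
    (∀ T : ℕ → ℕ, (∑ j ∈ Finset.Icc 1 D, T j * j = K) → 1 ≤ T D →
      L * (K / D) + min L R ≤
        ∑ j ∈ Finset.Icc 1 L, T j * j + ∑ j ∈ Finset.Icc (L + 1) D, T j * L) ∧
    (let T : ℕ → ℕ := fun j =>
        if j = D then K / D else if j = R then (if R = 0 then 0 else 1) else 0
     (∑ j ∈ Finset.Icc 1 D, T j * j = K) ∧ 1 ≤ T D ∧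
      ∑ j ∈ Finset.Icc 1 L, T j * j + ∑ j ∈ Finset.Icc (L + 1) D, T j * L =
        L * (K / D) + min L R) := by
  have hD : 0 < D := hL.trans hLD
  subst hR
  constructor
  · intro T hT _
    rw [ilp_obj_eq L D hLD T]
    exact ilp_lb L D hL hLD K T hT
  · intro T
    have hTdef : T = fun j =>
        if j = D then K / D else if j = K % D then (if K % D = 0 then 0 else 1) else 0 := rfl
    have hRD : K % D < D := Nat.mod_lt _ hD
    have hDmem : D ∈ Finset.Icc 1 D := Finset.mem_Icc.mpr ⟨hD, le_refl D⟩
    have hsum : ∀ w : ℕ → ℕ, ∑ j ∈ Finset.Icc 1 D, T j * w j =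
        K / D * w D + (if K % D = 0 then 0 else w (K % D)) := by
      intro w
      rw [← Finset.sum_erase_add _ _ hDmem]
      have hTD : T D * w D = K / D * w D := by rw [hTdef]; simp
      have herase : ∑ j ∈ (Finset.Icc 1 D).erase D, T j * w j =
          if K % D = 0 then 0 else w (K % D) := by
        have hcong : ∀ i ∈ (Finset.Icc 1 D).erase D,
            T i * w i = if i = K % D then (if K % D = 0 then 0 else w i) else 0 := by
          intro i hi
          have hne : i ≠ D := Finset.ne_of_mem_erase hi
          rw [hTdef]
          simp only [if_neg hne]
          split_ifs <;> simp
        rw [Finset.sum_congr rfl hcong, Finset.sum_ite_eq']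
        by_cases hR0 : K % D = 0
        · simp [hR0]
        · rw [if_pos, if_neg hR0]
          refine Finset.mem_erase.mpr ⟨by omega, Finset.mem_Icc.mpr ⟨by omega, by omega⟩⟩
      rw [herase, hTD, Nat.add_comm]
    refine ⟨?_, ?_, ?_⟩
    · rw [hsum (fun j => j)]
      have := Nat.div_add_mod' K D
      split_ifs with h0 <;> omega
    · rw [hTdef]
      simp only [if_pos rfl]
      exact Nat.div_pos hDK hD
    · rw [ilp_obj_eq L D hLD T, hsum (fun j => min L j)]
      rw [min_eq_left hLD]
      by_cases h0 : K % D = 0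
      · rw [if_pos h0, h0, Nat.min_zero, Nat.add_zero, Nat.add_zero, Nat.mul_comm]
      · rw [if_neg h0, Nat.mul_comm]
end

section
/- Let K, D, L be positive integers with L ≤ D ≤ K. Suppose W_1, ..., W_n are D-subsets of {1,...,K} such that for each i, the set W_i \ (W_1 ∪ ... ∪ W_{i−1}) is nonempty with size N_i, and W_1 ∪ ... ∪ W_n = {1,...,K}. For each i, let V_i be an L×D MDS matrix over a field F (every L×L submatrix invertible), and let U_i be the L×K matrix whose restriction to columns indexed by W_i equals V_i and which is zero elsewhere. Then the rank of the matrix obtained by stacking U_1, ..., U_n vertically is at least ∑_{i=1}^n min(L, N_i). -/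
open Finset

/-- Choose an injective tuple of `m` elements inside a finset of card ≥ m. -/
lemma exists_inj_into {α : Type*} [DecidableEq α] (S : Finset α) (m : ℕ) (hm : m ≤ S.card) :
    ∃ t : Fin m → α, Function.Injective t ∧ ∀ j, t j ∈ S := by
  obtain ⟨T, hTS, hT⟩ := Finset.exists_subset_card_eq hm
  have hcard : Fintype.card T = m := by simpa using hT
  let eT := Fintype.equivFinOfCardEq hcard
  refine ⟨fun j => (eT.symm j : α), ?_, fun j => hTS (eT.symm j).2⟩
  intro a b hab
  have : eT.symm a = eT.symm b := Subtype.ext hab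
  simpa using congrArg eT this

/-- Extend an injective map `Fin m → Fin D` (with `m ≤ L ≤ D`) to an injective
map `Fin L → Fin D`. -/
lemma exists_inj_extend {m L D : ℕ} (hmL : m ≤ L) (hLD : L ≤ D) (d : Fin m → Fin D)
    (hd : Function.Injective d) :
    ∃ f : Fin L → Fin D, Function.Injective f ∧ ∀ j : Fin m, f (Fin.castLE hmL j) = d j := by
  classical
  set S : Finset (Fin D) := (Finset.univ.image d)ᶜ with hS
  have hScard : S.card = D - m := by
    rw [hS, Finset.card_compl, Finset.card_image_of_injective _ hd]
    simp
  obtain ⟨t, ht, htS⟩ := exists_inj_into S (L - m) (by omega)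
  refine ⟨fun j => if h : (j : ℕ) < m then d ⟨j, h⟩ else t ⟨(j : ℕ) - m, by omega⟩, ?_, ?_⟩
  · intro a b hab
    dsimp only at hab
    by_cases ha : (a : ℕ) < m <;> by_cases hb : (b : ℕ) < m <;>
      simp only [ha, hb, dif_pos, dif_neg, not_false_iff] at hab
    · have := hd hab; apply Fin.ext; simpa [Fin.ext_iff] using this
    · exfalso
      have h1 : t ⟨(b : ℕ) - m, by omega⟩ ∈ S := htS _
      rw [← hab, hS, Finset.mem_compl] at h1
      exact h1 (Finset.mem_image_of_mem d (Finset.mem_univ _))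
    · exfalso
      have h1 : t ⟨(a : ℕ) - m, by omega⟩ ∈ S := htS _
      rw [hab, hS, Finset.mem_compl] at h1
      exact h1 (Finset.mem_image_of_mem d (Finset.mem_univ _))
    · have h2 := congrArg Fin.val (ht hab)
      simp only at h2
      apply Fin.ext
      omega
  · intro j
    have : ((Fin.castLE hmL j : Fin L) : ℕ) = (j : ℕ) := rfl
    simp only [this, j.isLt, dif_pos]

/-- Any `m ≤ L` columns of an MDS matrix are linearly independent. -/
lemma mds_cols_li {F : Type*} [Field F] {L D : ℕ} (hLD : L ≤ D)
    (V : Matrix (Fin L) (Fin D) F)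
    (hMDS : ∀ f : Fin L → Fin D, Function.Injective f → ((V).submatrix id f).det ≠ 0)
    {m : ℕ} (hmL : m ≤ L) (d : Fin m → Fin D) (hd : Function.Injective d) :
    LinearIndependent F (fun j : Fin m => (fun l => V l (d j))) := by
  obtain ⟨f, hf, hfd⟩ := exists_inj_extend hmL hLD d hd
  have hdet : IsUnit (V.submatrix id f).det := by
    exact (hMDS f hf).isUnit
  have hli : LinearIndependent F (fun j l => (V.submatrix id f) l j) :=
    Matrix.linearIndependent_cols_iff_isUnit.mpr ((Matrix.isUnit_iff_isUnit_det _).mpr hdet)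
  have := hli.comp (Fin.castLE hmL) (Fin.castLE_injective hmL)
  convert this using 1
  funext j l
  simp [Matrix.transpose, Matrix.submatrix, hfd j]


/-- The stacked matrix of the embedded MDS matrices U_1,...,U_n has rank at least
∑ min(L, N_i), where N_i is the number of fresh indices covered by W_i. -/
theorem stmt8 {F : Type*} [Field F] (K D L : ℕ) (hL : 1 ≤ L) (hLD : L ≤ D) (hDK : D ≤ K)
    (n : ℕ) (W : Fin n → Finset (Fin K)) (hWcard : ∀ i, (W i).card = D)
    (N : Fin n → ℕ)
    (hN : ∀ i, N i = ((W i) \ (Finset.Iio i).biUnion W).card)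
    (hNpos : ∀ i, 0 < N i)
    (hcover : Finset.univ.biUnion W = (Finset.univ : Finset (Fin K)))
    (V : Fin n → Matrix (Fin L) (Fin D) F)
    (hMDS : ∀ i (f : Fin L → Fin D), Function.Injective f →
      ((V i).submatrix id f).det ≠ 0)
    (e : Fin n → Fin D → Fin K) (he : ∀ i, Function.Injective (e i))
    (heW : ∀ i, Finset.univ.image (e i) = W i)
    (U : Fin n → Matrix (Fin L) (Fin K) F)
    (hU1 : ∀ i l d, U i l (e i d) = V i l d)
    (hU0 : ∀ i l k, k ∉ W i → U i l k = 0) :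
    ∑ i, min L (N i) ≤ (Matrix.of fun (p : Fin n × Fin L) k => U p.1 p.2 k).rank := by
  classical
  set M : Matrix (Fin n × Fin L) (Fin K) F :=
    Matrix.of fun (p : Fin n × Fin L) k => U p.1 p.2 k with hM
  set Fr : Fin n → Finset (Fin K) := fun i => W i \ (Finset.Iio i).biUnion W with hFrdef
  have hFrW : ∀ i, Fr i ⊆ W i := fun i => Finset.sdiff_subset
  have hFrnot : ∀ i i' : Fin n, i < i' → ∀ k ∈ Fr i', k ∉ W i := by
    intro i i' hii' k hk hkW
    exact (Finset.mem_sdiff.mp hk).2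
      (Finset.mem_biUnion.mpr ⟨i, Finset.mem_Iio.mpr hii', hkW⟩)
  set P : Fin n → Finset (Fin D) :=
    fun i => Finset.univ.filter (fun d => e i d ∈ Fr i) with hPdef
  have hPcard : ∀ i, (P i).card = N i := by
    intro i
    rw [hN]
    have himg : (P i).image (e i) = Fr i := by
      apply Finset.Subset.antisymm
      · intro k hk
        obtain ⟨d, hd, rfl⟩ := Finset.mem_image.mp hk
        exact (Finset.mem_filter.mp hd).2
      · intro k hk
        have hkW : k ∈ W i := hFrW i hk
        rw [← heW i] at hkW
        obtain ⟨d, -, rfl⟩ := Finset.mem_image.mp hkW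
        exact Finset.mem_image.mpr ⟨d, Finset.mem_filter.mpr ⟨Finset.mem_univ _, hk⟩, rfl⟩
    calc (P i).card = ((P i).image (e i)).card :=
          (Finset.card_image_of_injective _ (he i)).symm
      _ = _ := by rw [himg]
  have hminP : ∀ i, min L (N i) ≤ (P i).card := fun i => by
    rw [hPcard]; exact min_le_right _ _
  choose t ht hts using fun i => exists_inj_into (P i) (min L (N i)) (hminP i)
  have htFr : ∀ i j, e i (t i j) ∈ Fr i := fun i j => (Finset.mem_filter.mp (hts i j)).2
  set c : (Σ i : Fin n, Fin (min L (N i))) → Fin K := fun s => e s.1 (t s.1 s.2) with hcdef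
  set v : (Σ i : Fin n, Fin (min L (N i))) → (Fin n × Fin L → F) :=
    fun s => fun p => M p (c s) with hvdef
  have hli : LinearIndependent F v := by
    rw [Fintype.linearIndependent_iff]
    intro g hg
    suffices h : ∀ m : ℕ, ∀ i : Fin n, (i : ℕ) = m → ∀ j, g ⟨i, j⟩ = 0 by
      rintro ⟨i, j⟩; exact h i i rfl j
    intro m
    induction m using Nat.strong_induction_on with
    | _ m IH =>
      rintro i rfl j
      have hrow : ∀ l : Fin L, ∑ j', g ⟨i, j'⟩ * V i l (t i j') = 0 := by
        intro l
        have hsum : ∑ s, g s * M (i, l) (c s) = 0 := by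
          have h0 := congrFun hg (i, l)
          simpa [hvdef, Finset.sum_apply, Pi.smul_apply, smul_eq_mul] using h0
        rw [← Finset.univ_sigma_univ, Finset.sum_sigma] at hsum
        rw [Fintype.sum_eq_single i ?side] at hsum
        · have : ∀ j', g ⟨i, j'⟩ * M (i, l) (c ⟨i, j'⟩) = g ⟨i, j'⟩ * V i l (t i j') := by
            intro j'
            congr 1
            show U i l (e i (t i j')) = V i l (t i j')
            exact hU1 i l (t i j')
          rw [← hsum]
          exact Finset.sum_congr rfl fun j' _ => (this j').symm
        · intro i' hne
          rcases lt_or_gt_of_ne hne with hlt | hgt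
          · apply Finset.sum_eq_zero
            intro j' _
            rw [IH i' (by exact_mod_cast hlt) i' rfl j', zero_mul]
          · apply Finset.sum_eq_zero
            intro j' _
            have hnot : c ⟨i', j'⟩ ∉ W i := hFrnot i i' hgt _ (htFr i' j')
            have hz : M (i, l) (c ⟨i', j'⟩) = 0 := hU0 i l _ hnot
            rw [hz, mul_zero]
      have hliV := mds_cols_li hLD (V i) (fun f hf => hMDS i f hf)
        (min_le_left L (N i)) (t i) (ht i)
      rw [Fintype.linearIndependent_iff] at hliV
      refine hliV (fun j' => g ⟨i, j'⟩) ?_ j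
      funext l
      simpa [Finset.sum_apply, Pi.smul_apply, smul_eq_mul] using hrow l
  have hcard : Fintype.card (Σ i : Fin n, Fin (min L (N i))) ≤ M.rank := by
    rw [Matrix.rank_eq_finrank_span_cols]
    set S := Submodule.span F (Set.range M.transpose) with hSdef
    have hvmem : ∀ s, v s ∈ S := fun s => Submodule.subset_span ⟨c s, rfl⟩
    have hli' : LinearIndependent F (fun s => (⟨v s, hvmem s⟩ : S)) :=
      LinearIndependent.of_comp S.subtype hli
    exact hli'.fintype_card_le_finrank
  calc ∑ i, min L (N i) = Fintype.card (Σ i : Fin n, Fin (min L (N i))) := by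
        simp [Fintype.card_sigma]
    _ ≤ M.rank := hcard
end

section
/- Let V be an L×D MDS matrix over a field, let W ⊆ {1,...,K} with |W| = D, and let U be the L×K matrix supported on columns W with U restricted to W equal to V. Let S be a subset of W with |S| = N, and suppose U' is any matrix whose columns indexed by S are all zero. Then U contains min(L, N) rows that are linearly independent from the row space of U'. -/
open Module Submodule

set_option maxHeartbeats 1000000 in
/-- The embedded MDS matrix U contains min(L,N) rows linearly independent from the
row space of any matrix U' vanishing on the N columns S ⊆ W. -/
theorem stmt9 {F : Type*} [Field F] {ι : Type*} (K D L N : ℕ)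
    (hL : 1 ≤ L) (hLD : L ≤ D) (hDK : D ≤ K)
    (V : Matrix (Fin L) (Fin D) F)
    (hMDS : ∀ f : Fin L → Fin D, Function.Injective f → (V.submatrix id f).det ≠ 0)
    (W : Finset (Fin K)) (hW : W.card = D)
    (e : Fin D → Fin K) (he : Function.Injective e) (heW : Finset.univ.image e = W)
    (U : Matrix (Fin L) (Fin K) F)
    (hU1 : ∀ l d, U l (e d) = V l d) (hU0 : ∀ l k, k ∉ W → U l k = 0)
    (S : Finset (Fin K)) (hSW : S ⊆ W) (hS : S.card = N)
    (U' : Matrix ι (Fin K) F) (hU' : ∀ r, ∀ k ∈ S, U' r k = 0) :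
    ∃ T : Finset (Fin L), T.card = min L N ∧
      ∀ c : Fin L → F,
        (∑ i ∈ T, c i • U i) ∈ Submodule.span F (Set.range fun r => U' r) →
          ∀ i ∈ T, c i = 0 := by
  classical
  -- The preimage of S inside Fin D
  have hSrange : ∀ k ∈ S, ∃ d, e d = k := by
    intro k hk
    have hkW := hSW hk
    rw [← heW] at hkW
    simpa using hkW
  set S' : Finset (Fin D) := Finset.univ.filter (fun d => e d ∈ S) with hS'def
  have hS'card : S'.card = N := by
    rw [← hS]
    apply Finset.card_bij (fun d _ => e d)
    · intro a ha; simp only [hS'def, Finset.mem_filter] at ha; exact ha.2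
    · intro a _ b _ hab; exact he hab
    · intro b hb
      obtain ⟨d, hd⟩ := hSrange b hb
      exact ⟨d, by simp [hS'def, hd, hb], hd⟩
  set g : Fin N ↪o Fin D := S'.orderEmbOfFin hS'card with hgdef
  have hgmem : ∀ j, e (g j) ∈ S := by
    intro j
    have := S'.orderEmbOfFin_mem hS'card j
    exact (Finset.mem_filter.mp this).2
  set A : Matrix (Fin L) (Fin N) F := fun i j => V i (g j) with hAdef
  -- the row space of A has dimension min L N
  have hfin : finrank F (span F (Set.range A)) = min L N := by
    rcases le_total L N with hLN | hNL
    · -- rows of A are linearly independent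
      have hinj : Function.Injective (g ∘ Fin.castLE hLN) :=
        g.injective.comp (Fin.castLE_injective hLN)
      have hdet := hMDS _ hinj
      have hUnit : IsUnit (V.submatrix id (g ∘ Fin.castLE hLN)) := by
        rw [Matrix.isUnit_iff_isUnit_det]; exact hdet.isUnit
      have hrowsM := Matrix.linearIndependent_rows_iff_isUnit.mpr hUnit
      have hrows : LinearIndependent F A := by
        have hcomp : (LinearMap.funLeft F F (Fin.castLE hLN)) ∘ A
            = V.submatrix id (g ∘ Fin.castLE hLN) := by
          funext i; funext j; rfl
        exact LinearIndependent.of_comp (LinearMap.funLeft F F (Fin.castLE hLN))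
          (by rw [← hcomp] at hrowsM; exact hrowsM)
      have := linearIndependent_iff_card_eq_finrank_span.mp hrows
      rw [Set.finrank] at this
      rw [← this, Fintype.card_fin, min_eq_left hLN]
    · -- columns of A are linearly independent; construct extension f of g
      have hgcard : (Finset.univ.image (g : Fin N → Fin D)).card = N := by
        rw [Finset.card_image_of_injective _ g.injective, Finset.card_univ, Fintype.card_fin]
      have hcompl : L - N ≤ ((Finset.univ.image (g : Fin N → Fin D))ᶜ : Finset (Fin D)).card := by
        rw [Finset.card_compl, hgcard, Fintype.card_fin]; omega
      obtain ⟨t2, ht2sub, ht2card⟩ := Finset.exists_subset_card_eq hcompl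
      set h2 : Fin (L - N) ↪o Fin D := t2.orderEmbOfFin ht2card with hh2def
      have hdisj : ∀ j j', g j ≠ h2 j' := by
        intro j j' hEq
        have h1 : g j ∈ Finset.univ.image (g : Fin N → Fin D) :=
          Finset.mem_image_of_mem _ (Finset.mem_univ _)
        have h3 : h2 j' ∈ (Finset.univ.image (g : Fin N → Fin D))ᶜ :=
          ht2sub (t2.orderEmbOfFin_mem ht2card j')
        rw [hEq] at h1
        exact (Finset.mem_compl.mp h3) h1
      set f : Fin L → Fin D := fun i =>
        if h : i.val < N then g ⟨i.val, h⟩ else h2 ⟨i.val - N, by omega⟩ with hfdef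
      have hfinj : Function.Injective f := by
        intro a b hab
        simp only [hfdef] at hab
        split_ifs at hab with h1 h2'
        · exact Fin.ext (by simpa using congrArg Fin.val (g.injective hab))
        · exact absurd hab (hdisj _ _)
        · exact absurd hab.symm (hdisj _ _)
        · have h3 := h2.injective hab
          simp only [Fin.mk.injEq] at h3
          exact Fin.ext (by omega)
      have hdet := hMDS f hfinj
      have hUnit : IsUnit (V.submatrix id f) := by
        rw [Matrix.isUnit_iff_isUnit_det]; exact hdet.isUnit
      have hcolsM := Matrix.linearIndependent_cols_iff_isUnit.mpr hUnit
      have hcols : LinearIndependent F A.transpose := by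
        have hAT : A.transpose = (V.submatrix id f).transpose ∘ (Fin.castLE hNL) := by
          funext j; funext i
          show V i (g j) = V i (f (Fin.castLE hNL j))
          have : f (Fin.castLE hNL j) = g j := by
            simp only [hfdef]
            rw [dif_pos (show (Fin.castLE hNL j).val < N from j.isLt)]
            exact congrArg g (Fin.ext rfl)
          rw [this]
        rw [hAT]
        exact hcolsM.comp _ (Fin.castLE_injective hNL)
      have hcolrank : A.rank = N := by
        rw [Matrix.rank_eq_finrank_span_cols]
        have := linearIndependent_iff_card_eq_finrank_span.mp hcols
        rw [Set.finrank] at this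
        rw [Fintype.card_fin] at this; exact this.symm
      rw [show finrank F (span F (Set.range A)) = A.rank from
        (Matrix.rank_eq_finrank_span_row (A := A)).symm, hcolrank, min_eq_right hNL]
  -- extract an independent subset of rows
  obtain ⟨t, hts, hspan, hli⟩ := exists_linearIndependent F (Set.range A)
  have htfin : t.Finite := (Set.finite_range A).subset hts
  haveI : Fintype t := htfin.fintype
  have htcard : t.toFinset.card = min L N := by
    have h1 := finrank_span_set_eq_card hli
    rw [hspan, hfin] at h1
    exact h1.symm
  -- choose a row index for each vector in t
  set φ : (Fin N → F) → Fin L := fun v =>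
    if h : ∃ i, A i = v then h.choose else ⟨0, hL⟩ with hφdef
  have hφA : ∀ v ∈ t, A (φ v) = v := by
    intro v hv
    have h : ∃ i, A i = v := hts hv
    simp only [hφdef, dif_pos h]
    exact h.choose_spec
  set T : Finset (Fin L) := t.toFinset.image φ with hTdef
  have hinjOn : ∀ x ∈ t.toFinset, ∀ y ∈ t.toFinset, φ x = φ y → x = y := by
    intro x hx y hy hxy
    have := hφA x (Set.mem_toFinset.mp hx)
    rw [hxy, hφA y (Set.mem_toFinset.mp hy)] at this
    exact this.symm
  refine ⟨T, ?_, ?_⟩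
  · rw [hTdef, Finset.card_image_of_injOn hinjOn, htcard]
  · intro c hc i hiT
    -- elements of the span vanish on S
    have hvanish : ∀ k ∈ S, (∑ i ∈ T, c i • U i) k = 0 := by
      intro k hk
      have hle : Submodule.span F (Set.range fun r => U' r)
          ≤ LinearMap.ker (LinearMap.proj k : (Fin K → F) →ₗ[F] F) := by
        rw [Submodule.span_le]
        rintro x ⟨r, rfl⟩
        simpa using hU' r k hk
      simpa using hle hc
    have hAc : (∑ i ∈ T, c i • A i) = 0 := by
      funext j
      have h0 := hvanish (e (g j)) (hgmem j)
      rw [Finset.sum_apply] at h0 ⊢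
      simp only [Pi.smul_apply, smul_eq_mul, hU1] at h0
      simpa [hAdef] using h0
    have hsum : ∑ v ∈ t.toFinset, c (φ v) • v = 0 := by
      rw [hTdef, Finset.sum_image hinjOn] at hAc
      rw [← hAc]
      exact Finset.sum_congr rfl fun v hv => by
        rw [hφA v (Set.mem_toFinset.mp hv)]
    -- transfer linear independence to the Finset coercion
    have hli' : LinearIndependent F (fun v : {x // x ∈ t.toFinset} => (v : Fin N → F)) :=
      hli.comp (fun v => ⟨v.1, Set.mem_toFinset.mp v.2⟩)
        (fun a b hab => Subtype.ext (by simpa [Subtype.mk.injEq] using hab))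
    have hzero := Fintype.linearIndependent_iff.mp hli' (fun v => c (φ v.1)) (by
      rw [Finset.sum_coe_sort t.toFinset (fun v => c (φ v) • v)]
      exact hsum)
    rw [hTdef, Finset.mem_image] at hiT
    obtain ⟨v, hv, rfl⟩ := hiT
    exact hzero ⟨v, hv⟩
end
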